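/- Let c ≥ 1 and let A be a finite-dimensional commutative unital ℝ-algebra with a ℤ/cℤ-grading A = ⊕_{k ∈ ℤ/cℤ} A_k (so A_k·A_l ⊆ A_{k+l} and 1 ∈ A_0). Suppose there is an ℝ-linear form φ_0 : A_0 → ℝ with φ_0(1) = 1 such that the bilinear form Q_0(a,b) = φ_0(ab) on A_0 is positive definite. If there exists a ∈ A_1 such that multiplication by a is injective on A (i.e. Ker E_a = 0), then A is semisimple (its Jacobson radical is zero). -/

import Mathlib

open LinearMap in
lemma trace_comp_self_nonneg_aux
    {V : Type*} [AddCommGroup V] [Module ℝ V] [FiniteDimensional ℝ V]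
    (B : V → V → ℝ)
    (hB1 : ∀ x y z, B (x + y) z = B x z + B y z)
    (hB2 : ∀ (t : ℝ) (x y : V), B (t • x) y = t * B x y)
    (hsymm : ∀ x y, B x y = B y x)
    (hpd : ∀ x, x ≠ 0 → 0 < B x x)
    (r : V →ₗ[ℝ] V) (hr : ∀ x y, B (r x) y = B x (r y)) :
    (0 ≤ trace ℝ V (r ∘ₗ r)) ∧ (r ≠ 0 → 0 < trace ℝ V (r ∘ₗ r)) := by
  have hB0 : ∀ y, B 0 y = 0 := by
    intro y
    have := hB2 0 0 y
    simpa using this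
  have hnonneg : ∀ x, 0 ≤ B x x := by
    intro x
    rcases eq_or_ne x 0 with h | h
    · simp [h, hB0]
    · exact le_of_lt (hpd x h)
  letI core : InnerProductSpace.Core ℝ V :=
  { inner := B
    conj_inner_symm := fun x y => by simpa using hsymm y x
    re_inner_nonneg := fun x => by simpa using hnonneg x
    add_left := hB1
    smul_left := fun x y t => by simpa using hB2 t x y
    definite := fun x hx => by
      by_contra h
      exact absurd hx (ne_of_gt (hpd x h))
    }
  letI : NormedAddCommGroup V := core.toNormedAddCommGroup
  letI : InnerProductSpace ℝ V := InnerProductSpace.ofCore core.toCore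
  have hinner : ∀ x y : V, (inner ℝ x y : ℝ) = B x y := fun _ _ => rfl
  set e := stdOrthonormalBasis ℝ V with he
  have htr : trace ℝ V (r ∘ₗ r) = ∑ i, B (r (e i)) (r (e i)) := by
    rw [trace_eq_matrix_trace ℝ e.toBasis, Matrix.trace]
    congr 1
    ext i
    rw [Matrix.diag]
    rw [LinearMap.toMatrix_apply]
    rw [OrthonormalBasis.coe_toBasis, OrthonormalBasis.coe_toBasis_repr_apply,
      OrthonormalBasis.repr_apply_apply]
    rw [comp_apply, hinner, ← hr]
  constructor
  · rw [htr]
    exact Finset.sum_nonneg fun i _ => hnonneg _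
  · intro hrne
    rw [htr]
    have : ∃ i, r (e i) ≠ 0 := by
      by_contra h
      push_neg at h
      apply hrne
      apply Module.Basis.ext e.toBasis
      intro i
      simpa using h i
    obtain ⟨i, hi⟩ := this
    refine Finset.sum_pos' (fun j _ => hnonneg _) ⟨i, Finset.mem_univ i, hpd _ hi⟩

theorem semisimple_of_injective_mul_degree_one_element
    (c : ℕ) (hc : 1 ≤ c)
    (A : Type*) [CommRing A] [Algebra ℝ A] [FiniteDimensional ℝ A]
    (Agr : ZMod c → Submodule ℝ A)
    (hinternal : DirectSum.IsInternal Agr)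
    (hone : (1 : A) ∈ Agr 0)
    (hgrmul : ∀ (k l : ZMod c) (x y : A), x ∈ Agr k → y ∈ Agr l → x * y ∈ Agr (k + l))
    (φ0 : Agr 0 →ₗ[ℝ] ℝ)
    (hφ1 : φ0 ⟨1, hone⟩ = 1)
    (hpos : ∀ (x : A) (hx : x ∈ Agr 0), x ≠ 0 →
      0 < φ0 ⟨x * x, by simpa using hgrmul 0 0 x x hx hx⟩)
    (a : A) (ha : a ∈ Agr 1)
    (hinj : Function.Injective fun x : A => a * x) :
    Ideal.jacobson (⊥ : Ideal A) = ⊥ := by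
  classical
  haveI : NeZero c := ⟨by omega⟩
  haveI : DirectSum.Decomposition Agr := hinternal.chooseDecomposition
  -- projections
  let pr : ∀ j : ZMod c, A →ₗ[ℝ] Agr j := fun j =>
    (DirectSum.component ℝ (ZMod c) (fun i => ↥(Agr i)) j) ∘ₗ
      (DirectSum.decomposeLinearEquiv Agr).toLinearMap
  let π : ZMod c → A →ₗ[ℝ] A := fun j => (Agr j).subtype ∘ₗ pr j
  have hπ : ∀ (j : ZMod c) (x : A), π j x = (DirectSum.decompose Agr x j : A) :=
    fun j x => rfl
  have hπmem : ∀ (j : ZMod c) (x : A), π j x ∈ Agr j := fun j x =>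
    (DirectSum.decompose Agr x j).2
  have hπsame : ∀ (j : ZMod c) (x : A), x ∈ Agr j → π j x = x := fun j x hx =>
    DirectSum.decompose_of_mem_same Agr hx
  have hπne : ∀ (i j : ZMod c) (x : A), x ∈ Agr i → i ≠ j → π j x = 0 := fun i j x hx h =>
    DirectSum.decompose_of_mem_ne Agr hx h
  have hπsum : ∀ x : A, (∑ j : ZMod c, π j x) = x := by
    intro x
    conv_rhs => rw [← DirectSum.sum_support_decompose Agr x]
    refine (Finset.sum_subset (Finset.subset_univ _) ?_).symm
    intro i _ hi
    rw [hπ]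
    rw [DFinsupp.notMem_support_iff.mp hi]
    rfl
  -- the linear functional Φ
  let Φ : A →ₗ[ℝ] ℝ := φ0 ∘ₗ pr 0
  have hΦ : ∀ (z : A) (hz : z ∈ Agr 0), Φ z = φ0 ⟨z, hz⟩ := by
    intro z hz
    show φ0 (pr 0 z) = φ0 ⟨z, hz⟩
    congr 1
    exact Subtype.ext (DirectSum.decompose_of_mem_same Agr hz)
  have hΦpos : ∀ s : A, s ∈ Agr 0 → s ≠ 0 → 0 < Φ (s * s) := by
    intro s hs hsne
    rw [hΦ (s * s) (by simpa using hgrmul 0 0 s s hs hs)]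
    exact hpos s hs hsne
  -- invertibility of a
  have hinj' : Function.Injective ⇑(LinearMap.mulLeft ℝ a) := fun x y h => hinj (by simpa using h)
  obtain ⟨b0, hb0⟩ := LinearMap.injective_iff_surjective.mp hinj' 1
  rw [LinearMap.mulLeft_apply] at hb0
  set b : A := π (-1) b0 with hbdef
  have hbmem : b ∈ Agr (-1) := hπmem _ _
  have hb : a * b = 1 := by
    have e1 : a * b0 = ∑ j : ZMod c, a * π j b0 := by rw [← Finset.mul_sum, hπsum]
    have e2 : π 0 (a * b0) = ∑ j : ZMod c, π 0 (a * π j b0) := by rw [e1, map_sum]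
    have e3 : (∑ j : ZMod c, π 0 (a * π j b0)) = a * b := by
      rw [Finset.sum_eq_single (-1 : ZMod c)]
      · exact hπsame 0 _ (by simpa using hgrmul 1 (-1) a b ha hbmem)
      · intro j _ hj
        refine hπne (1 + j) 0 _ (hgrmul 1 j a _ ha (hπmem _ _)) ?_
        intro h
        exact hj (by linear_combination h)
      · intro h; exact absurd (Finset.mem_univ _) h
    rw [hb0, hπsame 0 1 hone] at e2
    exact (e2.trans e3).symm
  have hbpow : ∀ n : ℕ, b ^ n ∈ Agr (-(n : ZMod c)) := by
    intro n
    induction n with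
    | zero => simpa using hone
    | succ n ih =>
      have := hgrmul _ _ _ _ ih hbmem
      rw [pow_succ]
      convert this using 2
      push_cast
      ring
  have habn : ∀ n : ℕ, a ^ n * b ^ n = 1 := by
    intro n
    rw [← mul_pow, hb, one_pow]
  have hval : ∀ j : ZMod c, ((j.val : ZMod c)) = j := by
    intro j
    rw [ZMod.natCast_val, ZMod.cast_id]
  -- splitting of multiplication operators
  have hsplit : ∀ z : A,
      LinearMap.mulLeft ℝ z = ∑ j : ZMod c, (LinearMap.mulLeft ℝ z ∘ₗ (Agr j).subtype) ∘ₗ pr j := by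
    intro z
    ext x
    have : (∑ j : ZMod c, ((LinearMap.mulLeft ℝ z ∘ₗ (Agr j).subtype) ∘ₗ pr j)) x
        = ∑ j : ZMod c, z * π j x := by
      rw [LinearMap.sum_apply]
      rfl
    rw [this, ← Finset.mul_sum, hπsum, LinearMap.mulLeft_apply]
  -- (T1): trace of multiplication by a homogeneous element of nonzero degree is 0
  have tshift : ∀ (m : ZMod c), m ≠ 0 → ∀ h : A, h ∈ Agr m →
      LinearMap.trace ℝ A (LinearMap.mulLeft ℝ h) = 0 := by
    intro m hm h hmemh
    rw [hsplit h, map_sum]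
    refine Finset.sum_eq_zero fun j _ => ?_
    rw [LinearMap.trace_comp_comm']
    have : pr j ∘ₗ (LinearMap.mulLeft ℝ h ∘ₗ (Agr j).subtype) = 0 := by
      ext w
      have hmw : h * (w : A) ∈ Agr (m + j) := hgrmul m j _ _ hmemh w.2
      have hz : (DirectSum.decompose Agr (h * (w : A)) j : A) = 0 :=
        DirectSum.decompose_of_mem_ne Agr hmw (fun hmj => hm (by rwa [add_eq_right] at hmj))
      exact hz
    rw [this, map_zero]
  -- (T2): trace of multiplication by v*v for nonzero v of degree 0 is positive
  have tpos : ∀ v : A, v ∈ Agr 0 → v ≠ 0 →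
      0 < LinearMap.trace ℝ A (LinearMap.mulLeft ℝ (v * v)) := by
    intro v hv hvne
    have hrmem : ∀ j : ZMod c, ∀ x ∈ Agr j, (LinearMap.mulLeft ℝ v) x ∈ Agr j := by
      intro j x hx
      simpa using hgrmul 0 j v x hv hx
    let r : ∀ j : ZMod c, ↥(Agr j) →ₗ[ℝ] ↥(Agr j) := fun j =>
      (LinearMap.mulLeft ℝ v).restrict (hrmem j)
    have hrapp : ∀ (j : ZMod c) (w : Agr j), ((r j w : A)) = v * (w : A) := fun j w => rfl
    have hblock : ∀ j : ZMod c,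
        pr j ∘ₗ (LinearMap.mulLeft ℝ (v * v) ∘ₗ (Agr j).subtype) = r j ∘ₗ r j := by
      intro j
      ext w
      have hmw : v * v * (w : A) ∈ Agr j := by
        simpa using hgrmul 0 j (v * v) w (by simpa using hgrmul 0 0 v v hv hv) w.2
      show (DirectSum.decompose Agr (v * v * (w : A)) j : A) = ((r j (r j w) : A))
      rw [DirectSum.decompose_of_mem_same Agr hmw, hrapp, hrapp, mul_assoc]
    have hterm : ∀ j : ZMod c,
        LinearMap.trace ℝ A ((LinearMap.mulLeft ℝ (v * v) ∘ₗ (Agr j).subtype) ∘ₗ pr j)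
          = LinearMap.trace ℝ (Agr j) (r j ∘ₗ r j) := by
      intro j
      rw [LinearMap.trace_comp_comm', hblock j]
    -- the bilinear form and the aux lemma
    have haux : ∀ j : ZMod c,
        0 ≤ LinearMap.trace ℝ (Agr j) (r j ∘ₗ r j) ∧
          (r j ≠ 0 → 0 < LinearMap.trace ℝ (Agr j) (r j ∘ₗ r j)) := by
      intro j
      set jv : ℕ := j.val with hjv
      have hjcast : ((jv : ZMod c)) = j := hval j
      set B : ↥(Agr j) → ↥(Agr j) → ℝ :=
        fun w w' => Φ ((w : A) * (w' : A) * (b ^ jv * b ^ jv)) with hBdef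
      have hB1 : ∀ x y z : ↥(Agr j), B (x + y) z = B x z + B y z := by
        intro x y z
        rw [hBdef]
        simp only [Submodule.coe_add]
        rw [← map_add]
        ring_nf
      have hB2 : ∀ (t : ℝ) (x y : ↥(Agr j)), B (t • x) y = t * B x y := by
        intro t x y
        rw [hBdef]
        simp only [SetLike.val_smul]
        rw [smul_mul_assoc, smul_mul_assoc, map_smul, smul_eq_mul]
      have hsymmB : ∀ x y : ↥(Agr j), B x y = B y x := by
        intro x y
        rw [hBdef]
        ring_nf
      have hpdB : ∀ x : ↥(Agr j), x ≠ 0 → 0 < B x x := by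
        intro x hx
        have hsmem : (x : A) * b ^ jv ∈ Agr 0 := by
          have := hgrmul j (-(jv : ZMod c)) _ _ x.2 (hbpow jv)
          rwa [hjcast, add_neg_cancel] at this
        have hsne : (x : A) * b ^ jv ≠ 0 := by
          intro hzero
          have : (x : A) = 0 := by
            have : (x : A) * b ^ jv * a ^ jv = 0 := by rw [hzero, zero_mul]
            rwa [mul_assoc, mul_comm (b ^ jv), habn jv, mul_one] at this
          exact hx (Subtype.ext this)
        have := hΦpos _ hsmem hsne
        have heq : B x x = Φ (((x : A) * b ^ jv) * ((x : A) * b ^ jv)) := by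
          rw [hBdef]
          congr 1
          ring
        rw [heq]
        exact this
      have hrB : ∀ x y : ↥(Agr j), B (r j x) y = B x (r j y) := by
        intro x y
        rw [hBdef]
        simp only [hrapp]
        congr 1
        ring
      exact trace_comp_self_nonneg_aux B hB1 hB2 hsymmB hpdB (r j) hrB
    rw [hsplit (v * v), map_sum]
    rw [Finset.sum_congr rfl (fun j _ => hterm j)]
    refine Finset.sum_pos' (fun j _ => (haux j).1) ⟨0, Finset.mem_univ 0, ?_⟩
    refine (haux 0).2 ?_
    intro hr0
    apply hvne
    have : ((r 0 ⟨1, hone⟩ : A)) = v * 1 := hrapp 0 ⟨1, hone⟩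
    rw [hr0] at this
    simpa using this.symm
  -- reduce to: every nilpotent element is zero
  have hred : ∀ x : A, IsNilpotent x → x = 0 := by
    intro x hxnil
    by_contra hxne
    obtain ⟨k, hk⟩ : ∃ k : ZMod c, π k x ≠ 0 := by
      by_contra h
      push_neg at h
      apply hxne
      rw [← hπsum x]
      exact Finset.sum_eq_zero fun j _ => h j
    set kv : ℕ := k.val with hkv
    have hkcast : ((kv : ZMod c)) = k := hval k
    set xk : A := π k x with hxk
    have hxkmem : xk ∈ Agr k := hπmem k x
    set v : A := xk * b ^ kv with hvdef
    have hvmem : v ∈ Agr 0 := by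
      have := hgrmul k (-(kv : ZMod c)) _ _ hxkmem (hbpow kv)
      rwa [hkcast, add_neg_cancel] at this
    have hvne : v ≠ 0 := by
      intro hzero
      apply hk
      have : xk * b ^ kv * a ^ kv = 0 := by rw [← hvdef, hzero, zero_mul]
      rwa [mul_assoc, mul_comm (b ^ kv), habn kv, mul_one] at this
    set y : A := xk * (b ^ kv * b ^ kv) with hydef
    have hymem : y ∈ Agr (-k) := by
      have hbb : b ^ kv * b ^ kv ∈ Agr (-(kv : ZMod c) + -(kv : ZMod c)) :=
        hgrmul _ _ _ _ (hbpow kv) (hbpow kv)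
      have := hgrmul k _ _ _ hxkmem hbb
      rwa [hkcast, show k + (-k + -k) = -k by ring] at this
    set z : A := x * y with hzdef
    have hznil : IsNilpotent z := by
      obtain ⟨n, hn⟩ := hxnil
      exact ⟨n, by rw [hzdef, mul_pow, hn, zero_mul]⟩
    have h0 : LinearMap.trace ℝ A (LinearMap.mulLeft ℝ z) = 0 := by
      have hnilop : IsNilpotent (LinearMap.mulLeft ℝ z) := by
        obtain ⟨n, hn⟩ := hznil
        exact ⟨n, by rw [LinearMap.pow_mulLeft, hn, LinearMap.mulLeft_zero_eq_zero]⟩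
      exact (LinearMap.isNilpotent_trace_of_isNilpotent hnilop).eq_zero
    have hz0 : π 0 z = v * v := by
      have e1 : z = ∑ m : ZMod c, (π m x) * y := by rw [← Finset.sum_mul, hπsum]
      rw [e1, map_sum]
      rw [Finset.sum_eq_single k]
      · have hmem : xk * y ∈ Agr 0 := by
          have := hgrmul k (-k) _ _ hxkmem hymem
          rwa [add_neg_cancel] at this
        rw [hπsame 0 _ hmem, hydef, hvdef]
        ring
      · intro m _ hm
        refine hπne (m + (-k)) 0 _ (hgrmul m (-k) _ _ (hπmem m x) hymem) ?_
        intro h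
        exact hm (by linear_combination h)
      · intro h; exact absurd (Finset.mem_univ _) h
    have hsplit2 : LinearMap.mulLeft ℝ z = ∑ m : ZMod c, LinearMap.mulLeft ℝ (π m z) := by
      ext w
      rw [LinearMap.sum_apply]
      have : (∑ m : ZMod c, (LinearMap.mulLeft ℝ (π m z)) w) = ∑ m : ZMod c, π m z * w := rfl
      rw [this, ← Finset.sum_mul, hπsum, LinearMap.mulLeft_apply]
    have htr2 : LinearMap.trace ℝ A (LinearMap.mulLeft ℝ z)
        = LinearMap.trace ℝ A (LinearMap.mulLeft ℝ (v * v)) := by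
      rw [hsplit2, map_sum]
      rw [Finset.sum_eq_single (0 : ZMod c)]
      · rw [hz0]
      · intro m _ hm
        exact tshift m hm (π m z) (hπmem m z)
      · intro h; exact absurd (Finset.mem_univ _) h
    have := tpos v hvmem hvne
    rw [← htr2, h0] at this
    exact lt_irrefl 0 this
  -- conclude
  haveI : IsArtinianRing A := isArtinian_of_tower ℝ inferInstance
  obtain ⟨n, hn⟩ := IsArtinianRing.isNilpotent_jacobson_bot (R := A)
  refine le_antisymm ?_ bot_le
  intro x hx
  have hxn : x ^ n ∈ (Ideal.jacobson (⊥ : Ideal A)) ^ n := Ideal.pow_mem_pow hx n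
  rw [hn] at hxn
  have : x ^ n = 0 := by simpa using hxn
  simpa using hred x ⟨n, this⟩
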